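/- Let F be an IFS on a metric space X possessing a compact global trapping region Q (a compact set, forward-invariant under every fᵢ, such that every compact set C ⊆ X is absorbed: there is τ with Φᴵ(C) ⊆ Q for all |I| ≥ τ). Then Ω(Q) is a non-empty compact set which is H-invariant, i.e. Ω(Q) = ⋃_{i=1}^m fᵢ(Ω(Q)). -/

import Mathlib

open Filter Metric Topology

/-- Composition of the IFS maps along a word. -/
def ifsComp {X : Type*} {m : ℕ} (f : Fin m → X → X) : List (Fin m) → X → X
  | [], x => x
  | i :: I, x => f i (ifsComp f I x)

/-- The limit set of a set under the IFS. -/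
def limitSet {X : Type*} [MetricSpace X] {m : ℕ} (f : Fin m → X → X) (A : Set X) : Set X :=
  {y | ∃ (I : ℕ → List (Fin m)) (a : ℕ → X), (∀ n, a n ∈ A) ∧
    Tendsto (fun n => (I n).length) atTop atTop ∧
    Tendsto (fun n => ifsComp f (I n) (a n)) atTop (nhds y)}

lemma ifsComp_append {X : Type*} {m : ℕ} (f : Fin m → X → X) (A B : List (Fin m)) (x : X) :
    ifsComp f (A ++ B) x = ifsComp f A (ifsComp f B x) := by
  induction A with
  | nil => rfl
  | cons i A ih => simp [ifsComp, ih]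

lemma ifsComp_mem {X : Type*} {m : ℕ} {f : Fin m → X → X} {Q : Set X}
    (hQinv : ∀ i : Fin m, f i '' Q ⊆ Q) (I : List (Fin m)) {x : X} (hx : x ∈ Q) :
    ifsComp f I x ∈ Q := by
  induction I with
  | nil => exact hx
  | cons i I ih => exact hQinv i ⟨_, ih, rfl⟩

lemma ifsComp_continuous {X : Type*} [MetricSpace X] {m : ℕ} {f : Fin m → X → X}
    (hf : ∀ i, Continuous (f i)) (I : List (Fin m)) : Continuous (ifsComp f I) := by
  induction I with
  | nil => exact continuous_id
  | cons i I ih => exact (hf i).comp ih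

theorem stmt_9 {X : Type*} [MetricSpace X] {m : ℕ} (hm : 0 < m) (f : Fin m → X → X)
    (hf : ∀ i, Continuous (f i)) (Q : Set X) (hQne : Q.Nonempty) (hQc : IsCompact Q)
    (hQinv : ∀ i : Fin m, f i '' Q ⊆ Q)
    (hQabs : ∀ C : Set X, IsCompact C → ∃ τ : ℕ, ∀ I : List (Fin m), τ ≤ I.length →
      ∀ c ∈ C, ifsComp f I c ∈ Q) :
    (limitSet f Q).Nonempty ∧ IsCompact (limitSet f Q) ∧
      limitSet f Q = ⋃ i : Fin m, f i '' limitSet f Q := by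
  classical
  set E : ℕ → Set X := fun n => ⋃ I ∈ {I : List (Fin m) | I.length = n}, ifsComp f I '' Q
    with hEdef
  have hmemE : ∀ n x, x ∈ E n ↔ ∃ I : List (Fin m), I.length = n ∧ ∃ q ∈ Q,
      ifsComp f I q = x := by
    intro n x
    simp [hEdef, Set.mem_iUnion]
  have hEc : ∀ n, IsCompact (E n) :=
    fun n => (List.finite_length_eq (Fin m) n).isCompact_biUnion
      (fun I _ => hQc.image (ifsComp_continuous hf I))
  have hEclosed : ∀ n, IsClosed (E n) := fun n => (hEc n).isClosed
  have hEne : ∀ n, (E n).Nonempty := by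
    intro n
    obtain ⟨q, hq⟩ := hQne
    exact ⟨_, (hmemE n _).2 ⟨List.replicate n ⟨0, hm⟩, List.length_replicate,
      q, hq, rfl⟩⟩
  have hEdec : ∀ n, E (n + 1) ⊆ E n := by
    intro n x hx
    obtain ⟨I, hI, q, hq, hx⟩ := (hmemE _ _).1 hx
    refine (hmemE n x).2 ⟨I.take n, by simp [hI], ifsComp f (I.drop n) q,
      ifsComp_mem hQinv _ hq, ?_⟩
    rw [← ifsComp_append, List.take_append_drop, hx]
  have hEanti : Antitone E := antitone_nat_of_succ_le hEdec
  -- the key identification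
  have key : limitSet f Q = ⋂ n, E n := by
    apply Set.Subset.antisymm
    · rintro y ⟨I, a, haQ, hlen, htend⟩
      refine Set.mem_iInter.2 fun n => ?_
      refine (hEclosed n).mem_of_tendsto htend ?_
      filter_upwards [hlen.eventually_ge_atTop n] with k hk
      refine (hmemE n _).2 ⟨(I k).take n, by simp; omega,
        ifsComp f ((I k).drop n) (a k), ifsComp_mem hQinv _ (haQ k), ?_⟩
      rw [← ifsComp_append, List.take_append_drop]
    · intro y hy
      have h : ∀ n : ℕ, ∃ I : List (Fin m), I.length = n ∧ ∃ q ∈ Q,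
          ifsComp f I q = y := fun n => (hmemE n y).1 (Set.mem_iInter.1 hy n)
      choose I hIlen q hqQ hq using h
      refine ⟨I, q, hqQ, ?_, ?_⟩
      · simp only [hIlen]; exact tendsto_id
      · simpa [hq] using tendsto_const_nhds (α := X) (x := y) (f := atTop)
  rw [key]
  refine ⟨?_, ?_, ?_⟩
  · exact IsCompact.nonempty_iInter_of_sequence_nonempty_isCompact_isClosed E hEdec hEne
      (hEc 0) hEclosed
  · exact (hEc 0).of_isClosed_subset (isClosed_iInter hEclosed) (Set.iInter_subset E 0)
  · apply Set.Subset.antisymm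
    · -- each x in the intersection is f i of some point of the intersection
      intro x hx
      have h : ∀ n : ℕ, ∃ i : Fin m, ∃ z ∈ E n, f i z = x := by
        intro n
        obtain ⟨I, hI, qq, hqq, hx'⟩ := (hmemE (n + 1) x).1 (Set.mem_iInter.1 hx (n + 1))
        rcases I with _ | ⟨i, J⟩
        · simp at hI
        · exact ⟨i, ifsComp f J qq, (hmemE n _).2 ⟨J, by simpa using hI, qq, hqq, rfl⟩, hx'⟩
      choose g z hz hfz using h
      obtain ⟨i, hi⟩ := Finite.exists_infinite_fiber g
      rw [Set.infinite_coe_iff] at hi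
      have hAne : ∀ n, (E n ∩ f i ⁻¹' {x}).Nonempty := by
        intro n
        obtain ⟨k, hk, hnk⟩ := hi.exists_gt n
        simp only [Set.mem_preimage, Set.mem_singleton_iff] at hk
        exact ⟨z k, hEanti hnk.le (hz k), by simp [← hk, hfz k]⟩
      have hAc : IsCompact (E 0 ∩ f i ⁻¹' {x}) :=
        (hEc 0).inter_right (isClosed_singleton.preimage (hf i))
      obtain ⟨w, hw⟩ := IsCompact.nonempty_iInter_of_sequence_nonempty_isCompact_isClosed
        (fun n => E n ∩ f i ⁻¹' {x})
        (fun n => Set.inter_subset_inter_left _ (hEdec n)) hAne hAc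
        (fun n => ((hEclosed n).inter (isClosed_singleton.preimage (hf i))))
      rw [Set.mem_iInter] at hw
      exact Set.mem_iUnion.2 ⟨i, w, Set.mem_iInter.2 fun n => (hw n).1,
        by simpa using (hw 0).2⟩
    · rintro x hx
      obtain ⟨i, w, hw, rfl⟩ := Set.mem_iUnion.1 hx
      refine Set.mem_iInter.2 fun n => hEdec n ?_
      obtain ⟨I, hI, qq, hqq, hq⟩ := (hmemE n w).1 (Set.mem_iInter.1 hw n)
      exact (hmemE (n + 1) _).2 ⟨i :: I, by simp [hI], qq, hqq, by simp [ifsComp, hq]⟩
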